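/- For every integer k ≥ 1, the number P(2k) of primitive circular words of length 2k is odd if and only if either k is an odd squarefree integer, or k = 2q for some odd squarefree integer q; otherwise P(2k) is even. -/
import Mathlib


/-- Words of length `n` over the alphabet `{A, B}` are functions `ZMod n → Bool`. Two words
are cyclically equivalent if one is obtained from the other by a cyclic shift
`(C^r w) i = w (i + r)`; a circular word is an equivalence class. -/
def cyclicSetoid (n : ℕ) : Setoid (ZMod n → Bool) where
  r w w' := ∃ r : ZMod n, ∀ i, w' i = w (i + r)
  iseqv := by
    refine ⟨fun w => ⟨0, fun i => by rw [add_zero]⟩, ?_, ?_⟩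
    · rintro w w' ⟨r, h⟩
      exact ⟨-r, fun i => by rw [h (i + -r), neg_add_cancel_right]⟩
    · rintro w w' w'' ⟨r, h⟩ ⟨s, h'⟩
      exact ⟨s + r, fun i => by rw [h' i, h (i + s), add_assoc]⟩

/-- A word of length `2n` is balanced if the letter `A` (encoded `true`) occurs exactly
`n` times (and hence so does the letter `B`). -/
def BalancedWord (n : ℕ) (w : ZMod (2 * n) → Bool) : Prop :=
  Nat.card {i : ZMod (2 * n) // w i = true} = n

/-- A word of length `m` is primitive if its cyclic-shift orbit has exactly `m` elements. -/
def PrimitiveWord {m : ℕ} (w : ZMod m → Bool) : Prop :=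
  Nat.card {w' : ZMod m → Bool // (cyclicSetoid m).r w w'} = m

/-- A word `w` of length `n` is special if some cyclic shift of `w` equals its conjugate
`w*` (the word obtained by swapping the two letters): `C^r (w) = w*` for some `r`. -/
def SpecialWord {n : ℕ} (w : ZMod n → Bool) : Prop :=
  ∃ r : ZMod n, ∀ i, w (i + r) = ! w i

/-- `R n` is the number of balanced circular words of length `2n`: the number of
cyclic-shift orbits of balanced words of length `2n`. -/
noncomputable def R (n : ℕ) : ℕ :=
  Nat.card (Quotient (Setoid.comap
    (Subtype.val : {w : ZMod (2 * n) → Bool // BalancedWord n w} → (ZMod (2 * n) → Bool))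
    (cyclicSetoid (2 * n))))

/-- `P m` is the number of primitive circular words of length `m`: the number of
cyclic-shift orbits of primitive words of length `m`. -/
noncomputable def P (m : ℕ) : ℕ :=
  Nat.card (Quotient (Setoid.comap
    (Subtype.val : {w : ZMod m → Bool // PrimitiveWord w} → (ZMod m → Bool))
    (cyclicSetoid m)))

/-- `Q k` is the number of primitive balanced circular words of length `2k`: the number of
cyclic-shift orbits of primitive balanced words of length `2k`. -/
noncomputable def Q (k : ℕ) : ℕ :=
  Nat.card (Quotient (Setoid.comap
    (Subtype.val : {w : ZMod (2 * k) → Bool // BalancedWord k w ∧ PrimitiveWord w} →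
      (ZMod (2 * k) → Bool))
    (cyclicSetoid (2 * k))))

/-- `A m` is the number of `∗`-primitive circular words of length `2m`: the number of
cyclic-shift orbits of words of length `2m` that are both primitive and special. -/
noncomputable def A (m : ℕ) : ℕ :=
  Nat.card (Quotient (Setoid.comap
    (Subtype.val : {w : ZMod (2 * m) → Bool // PrimitiveWord w ∧ SpecialWord w} →
      (ZMod (2 * m) → Bool))
    (cyclicSetoid (2 * m))))


namespace CircWord

variable {n : ℕ}

instance : VAdd (ZMod n) (ZMod n → Bool) := ⟨fun r w i => w (i + r)⟩

lemma vadd_def (r : ZMod n) (w : ZMod n → Bool) (i : ZMod n) : (r +ᵥ w) i = w (i + r) := rfl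

instance : AddAction (ZMod n) (ZMod n → Bool) where
  zero_vadd w := funext fun i => by rw [vadd_def, add_zero]
  add_vadd r s w := funext fun i => by rw [vadd_def, vadd_def, vadd_def, add_assoc]

lemma rel_iff_orbit (w w' : ZMod n → Bool) :
    (cyclicSetoid n).r w w' ↔ w' ∈ AddAction.orbit (ZMod n) w := by
  constructor
  · rintro ⟨r, h⟩; exact ⟨r, funext fun i => (h i).symm⟩
  · rintro ⟨r, rfl⟩; exact ⟨r, fun i => rfl⟩

lemma card_orbit_mul_card_stab [NeZero n] (w : ZMod n → Bool) :
    Nat.card (AddAction.orbit (ZMod n) w) * Nat.card (AddAction.stabilizer (ZMod n) w) = n := by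
  have := Nat.card_congr (AddAction.orbitProdStabilizerEquivAddGroup (ZMod n) w)
  rw [Nat.card_prod, Nat.card_zmod] at this
  exact this

lemma primitive_iff_stab_eq_bot [NeZero n] (w : ZMod n → Bool) :
    PrimitiveWord w ↔ AddAction.stabilizer (ZMod n) w = ⊥ := by
  have hcard : Nat.card {w' : ZMod n → Bool // (cyclicSetoid n).r w w'}
      = Nat.card (AddAction.orbit (ZMod n) w) :=
    Nat.card_congr (Equiv.subtypeEquivRight fun w' => rel_iff_orbit w w')
  have hos := card_orbit_mul_card_stab w
  rw [PrimitiveWord, hcard, ← AddSubgroup.card_eq_one]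
  have hn : n ≠ 0 := NeZero.ne n
  constructor
  · intro h; rw [h] at hos
    exact Nat.eq_of_mul_eq_mul_left (Nat.pos_of_ne_zero hn) (by rw [hos, mul_one])
  · intro h; rw [h, mul_one] at hos; exact hos

section Lift

variable {d : ℕ}

def liftW (hd : d ∣ n) (v : ZMod d → Bool) : ZMod n → Bool :=
  fun i => v (ZMod.castHom hd (ZMod d) i)

lemma castHom_surj [NeZero d] (hd : d ∣ n) : Function.Surjective (ZMod.castHom hd (ZMod d)) :=
  fun j => ⟨((j.val : ℕ) : ZMod n), by rw [map_natCast, ZMod.natCast_rightInverse j]⟩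

lemma liftW_injective [NeZero d] (hd : d ∣ n) : Function.Injective (liftW (n := n) hd) := by
  intro v v' h
  funext j
  obtain ⟨i, rfl⟩ := castHom_surj hd j
  exact congrFun h i

lemma vadd_liftW (hd : d ∣ n) (r : ZMod n) (v : ZMod d → Bool) :
    r +ᵥ liftW hd v = liftW hd (ZMod.castHom hd (ZMod d) r +ᵥ v) := by
  funext i
  rw [vadd_def]
  show v _ = v _
  rw [map_add]

lemma mem_stab_liftW [NeZero d] (hd : d ∣ n) (r : ZMod n) (v : ZMod d → Bool) :
    r ∈ AddAction.stabilizer (ZMod n) (liftW hd v) ↔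
      ZMod.castHom hd (ZMod d) r ∈ AddAction.stabilizer (ZMod d) v := by
  rw [AddAction.mem_stabilizer_iff, AddAction.mem_stabilizer_iff, vadd_liftW]
  exact ⟨fun h => liftW_injective hd h, fun h => by rw [h]⟩

lemma stab_apply {w : ZMod n → Bool} {s : ZMod n}
    (hs : s ∈ AddAction.stabilizer (ZMod n) w) (x : ZMod n) : w (x + s) = w x :=
  congrFun hs x

end Lift

section MinPer

variable [NeZero n]

lemma per_exists (w : ZMod n → Bool) :
    ∃ t, 0 < t ∧ ((t : ℕ) : ZMod n) ∈ AddAction.stabilizer (ZMod n) w :=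
  ⟨n, Nat.pos_of_ne_zero (NeZero.ne n), by
    rw [ZMod.natCast_self]; exact zero_mem _⟩

open Classical in
noncomputable def minPer (w : ZMod n → Bool) : ℕ := Nat.find (per_exists w)

lemma minPer_pos (w : ZMod n → Bool) : 0 < minPer w := by
  classical exact (Nat.find_spec (per_exists w)).1

lemma minPer_mem (w : ZMod n → Bool) :
    ((minPer w : ℕ) : ZMod n) ∈ AddAction.stabilizer (ZMod n) w := by
  classical exact (Nat.find_spec (per_exists w)).2

lemma minPer_min (w : ZMod n → Bool) {t : ℕ} (ht : 0 < t)
    (h : ((t : ℕ) : ZMod n) ∈ AddAction.stabilizer (ZMod n) w) : minPer w ≤ t := by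
  classical exact Nat.find_min' (per_exists w) ⟨ht, h⟩

omit [NeZero n] in
lemma mul_cast_mem {w : ZMod n → Bool} {s : ℕ}
    (hs : ((s : ℕ) : ZMod n) ∈ AddAction.stabilizer (ZMod n) w) (c : ℕ) :
    ((s * c : ℕ) : ZMod n) ∈ AddAction.stabilizer (ZMod n) w := by
  have h := AddSubgroup.nsmul_mem (AddAction.stabilizer (ZMod n) w) hs c
  have he : ((s * c : ℕ) : ZMod n) = c • ((s : ℕ) : ZMod n) := by
    push_cast [nsmul_eq_mul]; ring
  rwa [he]

lemma mem_stab_natCast_iff (w : ZMod n → Bool) (t : ℕ) :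
    ((t : ℕ) : ZMod n) ∈ AddAction.stabilizer (ZMod n) w ↔ minPer w ∣ t := by
  constructor
  · intro ht
    have h1 := mul_cast_mem (minPer_mem w) (t / minPer w)
    have h2 : ((t % minPer w : ℕ) : ZMod n) ∈ AddAction.stabilizer (ZMod n) w := by
      have h0 : ((t : ℕ) : ZMod n)
          = ((minPer w * (t / minPer w) : ℕ) : ZMod n) + ((t % minPer w : ℕ) : ZMod n) := by
        rw [← Nat.cast_add, Nat.div_add_mod]
      have h3 : ((t % minPer w : ℕ) : ZMod n)
          = ((t : ℕ) : ZMod n) - ((minPer w * (t / minPer w) : ℕ) : ZMod n) := by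
        rw [h0]; ring
      rw [h3]; exact sub_mem ht h1
    rcases Nat.eq_zero_or_pos (t % minPer w) with h | h
    · exact Nat.dvd_of_mod_eq_zero h
    · have h6 := minPer_min w h h2
      have h7 := Nat.mod_lt t (minPer_pos w)
      omega
  · rintro ⟨c, rfl⟩
    exact mul_cast_mem (minPer_mem w) c

lemma minPer_dvd (w : ZMod n → Bool) : minPer w ∣ n := by
  rw [← mem_stab_natCast_iff w n, ZMod.natCast_self]
  exact zero_mem _

noncomputable def core (w : ZMod n → Bool) : ZMod (minPer w) → Bool :=
  fun j => w ((j.val : ℕ) : ZMod n)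

lemma liftW_core (w : ZMod n → Bool) : liftW (minPer_dvd w) (core w) = w := by
  haveI : NeZero (minPer w) := ⟨(minPer_pos w).ne'⟩
  funext i
  conv_rhs => rw [← ZMod.natCast_rightInverse i]
  show w ((((ZMod.castHom (minPer_dvd w) (ZMod (minPer w))) i).val : ℕ) : ZMod n) = _
  conv_lhs => rw [← ZMod.natCast_rightInverse i]
  rw [map_natCast, ZMod.val_natCast]
  have key : ((i.val : ℕ) : ZMod n)
      = ((i.val % minPer w : ℕ) : ZMod n) + ((minPer w * (i.val / minPer w) : ℕ) : ZMod n) := by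
    rw [← Nat.cast_add, Nat.mod_add_div]
  rw [key]
  exact (stab_apply ((mem_stab_natCast_iff w _).2 (dvd_mul_right _ _)) _).symm

lemma core_primitive (w : ZMod n → Bool) : PrimitiveWord (core w) := by
  haveI : NeZero (minPer w) := ⟨(minPer_pos w).ne'⟩
  rw [primitive_iff_stab_eq_bot, eq_bot_iff]
  intro t ht
  have h1 : ((t.val : ℕ) : ZMod n) ∈ AddAction.stabilizer (ZMod n) (liftW (minPer_dvd w) (core w)) := by
    rw [mem_stab_liftW, map_natCast, ZMod.natCast_rightInverse t]
    exact ht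
  rw [liftW_core] at h1
  have h2 := (mem_stab_natCast_iff w _).1 h1
  have h3 : t.val < minPer w := ZMod.val_lt t
  have h4 : t.val = 0 := Nat.eq_zero_of_dvd_of_lt h2 h3
  exact AddSubgroup.mem_bot.2 (ZMod.val_eq_zero t |>.1 h4)

lemma minPer_liftW {d : ℕ} (hd : d ∣ n) (v : ZMod d → Bool) (hv : PrimitiveWord v) :
    minPer (liftW hd v) = d := by
  haveI : NeZero d := ⟨fun h => NeZero.ne n (by subst h; exact Nat.eq_zero_of_zero_dvd hd)⟩
  have hstab : AddAction.stabilizer (ZMod d) v = ⊥ := (primitive_iff_stab_eq_bot v).1 hv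
  have hdpos : 0 < d := Nat.pos_of_ne_zero (NeZero.ne d)
  apply le_antisymm
  · apply minPer_min _ hdpos
    rw [mem_stab_liftW, map_natCast, ZMod.natCast_self, hstab]
    exact AddSubgroup.mem_bot.2 rfl
  · have h1 := minPer_mem (liftW hd v)
    rw [mem_stab_liftW, map_natCast, hstab, AddSubgroup.mem_bot,
      ZMod.natCast_eq_zero_iff] at h1
    exact Nat.le_of_dvd (minPer_pos _) h1

end MinPer

section Count

noncomputable def E (d : ℕ) : ℕ := Nat.card {v : ZMod d → Bool // PrimitiveWord v}

noncomputable def sigmaEquiv (hn : n ≠ 0) :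
    (Σ d : n.divisors, {v : ZMod (d : ℕ) → Bool // PrimitiveWord v}) ≃ (ZMod n → Bool) := by
  haveI : NeZero n := ⟨hn⟩
  refine Equiv.ofBijective (fun x => liftW (Nat.dvd_of_mem_divisors x.1.2) x.2.1) ⟨?_, ?_⟩
  · rintro ⟨⟨d₁, hd₁⟩, v₁, hv₁⟩ ⟨⟨d₂, hd₂⟩, v₂, hv₂⟩ h
    simp only at h
    have hdd : d₁ = d₂ := by
      rw [← minPer_liftW (Nat.dvd_of_mem_divisors hd₁) v₁ hv₁,
          ← minPer_liftW (Nat.dvd_of_mem_divisors hd₂) v₂ hv₂, h]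
    subst hdd
    haveI : NeZero d₁ := ⟨(Nat.pos_of_mem_divisors hd₁).ne'⟩
    have hv : v₁ = v₂ := liftW_injective (Nat.dvd_of_mem_divisors hd₁) h
    subst hv
    rfl
  · intro w
    exact ⟨⟨⟨minPer w, Nat.mem_divisors.2 ⟨minPer_dvd w, hn⟩⟩, core w, core_primitive w⟩,
      liftW_core w⟩

lemma sum_E_eq (hn : n ≠ 0) : ∑ d ∈ n.divisors, E d = 2 ^ n := by
  haveI : NeZero n := ⟨hn⟩
  haveI F : ∀ d : n.divisors, Fintype {v : ZMod (d : ℕ) → Bool // PrimitiveWord v} := by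
    intro d
    haveI : NeZero (d : ℕ) := ⟨(Nat.pos_of_mem_divisors d.2).ne'⟩
    exact Fintype.ofFinite _
  have h2 := Nat.card_congr (sigmaEquiv hn)
  rw [Nat.card_eq_fintype_card, Nat.card_eq_fintype_card, Fintype.card_sigma,
    Fintype.card_fun, ZMod.card] at h2
  have h3 : ∀ d : n.divisors,
      Fintype.card {v : ZMod (d : ℕ) → Bool // PrimitiveWord v} = E (d : ℕ) := by
    intro d
    rw [E, Nat.card_eq_fintype_card]
  rw [← Finset.sum_coe_sort n.divisors E]
  simp only [Fintype.card_bool] at h2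
  rw [← h2]
  exact Finset.sum_congr rfl fun d _ => (h3 d).symm

lemma prim_of_rel {w w' : ZMod n → Bool} (h : (cyclicSetoid n).r w w')
    (hw : PrimitiveWord w) : PrimitiveWord w' := by
  rw [PrimitiveWord] at hw ⊢
  exact (Nat.card_congr (Equiv.subtypeEquivRight fun x =>
    ⟨fun hx => (cyclicSetoid n).trans h hx,
     fun hx => (cyclicSetoid n).trans ((cyclicSetoid n).symm h) hx⟩)).trans hw

lemma E_eq_P_mul (hn : n ≠ 0) : E n = P n * n := by
  haveI : NeZero n := ⟨hn⟩
  set S := Setoid.comap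
    (Subtype.val : {w : ZMod n → Bool // PrimitiveWord w} → (ZMod n → Bool))
    (cyclicSetoid n) with hS
  haveI : Fintype {w : ZMod n → Bool // PrimitiveWord w} := Fintype.ofFinite _
  haveI : Fintype (Quotient S) := Fintype.ofFinite _
  have hfiber : ∀ q : Quotient S,
      Nat.card {w : {w : ZMod n → Bool // PrimitiveWord w} // Quotient.mk S w = q} = n := by
    intro q
    induction q using Quotient.ind with
    | _ w₀ =>
      have e1 : {w : {w : ZMod n → Bool // PrimitiveWord w} // Quotient.mk S w = Quotient.mk S w₀}
          ≃ {w' : ZMod n → Bool // (cyclicSetoid n).r w₀.1 w'} := by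
        refine Equiv.ofBijective (fun x => ⟨x.1.1, ?_⟩) ⟨?_, ?_⟩
        · have := Quotient.exact x.2
          exact S.symm this
        · rintro ⟨⟨w, hw⟩, hr⟩ ⟨⟨w', hw'⟩, hr'⟩ hh
          simp only [Subtype.mk.injEq] at hh
          subst hh
          rfl
        · rintro ⟨w', hr'⟩
          refine ⟨⟨⟨w', prim_of_rel hr' w₀.2⟩, Quotient.sound (S.symm hr')⟩, rfl⟩
      rw [Nat.card_congr e1]
      exact w₀.2
  have e2 := Equiv.sigmaFiberEquiv (Quotient.mk S)
  haveI : ∀ q : Quotient S,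
      Fintype {w : {w : ZMod n → Bool // PrimitiveWord w} // Quotient.mk S w = q} :=
    fun q => Fintype.ofFinite _
  have h4 := Nat.card_congr e2
  rw [Nat.card_eq_fintype_card, Nat.card_eq_fintype_card, Fintype.card_sigma] at h4
  have h5 : ∀ q : Quotient S,
      Fintype.card {w : {w : ZMod n → Bool // PrimitiveWord w} // Quotient.mk S w = q} = n := by
    intro q
    rw [← Nat.card_eq_fintype_card]
    exact hfiber q
  rw [E, Nat.card_eq_fintype_card, ← h4]
  rw [Finset.sum_congr rfl fun q _ => h5 q, Finset.sum_const, Finset.card_univ, smul_eq_mul]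
  rw [P, Nat.card_eq_fintype_card]

end Count

def rad (n : ℕ) : ℕ := ∏ p ∈ n.primeFactors, p

lemma rad_dvd (n : ℕ) : rad n ∣ n := Nat.prod_primeFactors_dvd n

lemma rad_squarefree (n : ℕ) (hn : n ≠ 0) : Squarefree (rad n) := by
  have hpos : 0 < rad n := Finset.prod_pos fun p hp => (Nat.prime_of_mem_primeFactors hp).pos
  rw [Nat.squarefree_iff_factorization_le_one hpos.ne']
  intro p
  rw [rad, Nat.factorization_prod (fun q hq => (Nat.prime_of_mem_primeFactors hq).ne_zero)]
  rw [Finsupp.finset_sum_apply]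
  have : ∀ q ∈ n.primeFactors, (Nat.factorization q) p = if q = p then 1 else 0 := by
    intro q hq
    rw [(Nat.prime_of_mem_primeFactors hq).factorization, Finsupp.single_apply]
  rw [Finset.sum_congr rfl this, Finset.sum_ite_eq' n.primeFactors p (fun _ => 1)]
  split <;> omega

lemma dvd_rad_of_squarefree {s n : ℕ} (hs : Squarefree s) (hsn : s ∣ n) (hn : n ≠ 0) :
    s ∣ rad n := by
  calc s = ∏ p ∈ s.primeFactors, p := (Nat.prod_primeFactors_of_squarefree hs).symm
  _ ∣ rad n := Finset.prod_dvd_prod_of_subset _ _ _ (Nat.primeFactors_mono hsn hn)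

lemma rad_eq_self_iff {u : ℕ} (hu : u ≠ 0) : rad u = u ↔ Squarefree u := by
  constructor
  · intro h; rw [← h]; exact rad_squarefree u hu
  · intro h; exact Nat.prod_primeFactors_of_squarefree h

lemma rad_two_mul {b u : ℕ} (hu2 : ¬ 2 ∣ u) (hu : u ≠ 0) :
    rad (2 ^ (b + 1) * u) = 2 * rad u := by
  have h2 : (2 : ℕ) ^ (b + 1) ≠ 0 := by positivity
  rw [rad, Nat.primeFactors_mul h2 hu, Nat.primeFactors_prime_pow (by omega) Nat.prime_two]
  have hdisj : Disjoint ({2} : Finset ℕ) u.primeFactors := by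
    simp only [Finset.disjoint_singleton_left, Nat.mem_primeFactors]
    tauto
  rw [Finset.prod_union hdisj, Finset.prod_singleton]
  rfl

lemma two_pow_lower (b : ℕ) (hb : 2 ≤ b) : b + 2 ≤ 2 ^ b := by
  induction b with
  | zero => omega
  | succ m ih =>
    rcases Nat.lt_or_ge m 2 with h | h
    · interval_cases m <;> simp_all <;> omega
    · have := ih h; rw [pow_succ]; omega


section Parity

lemma E_int (m : ℕ) (hm : 0 < m) :
    (E m : ℤ) = ∑ d ∈ m.divisors, (ArithmeticFunction.moebius d : ℤ) * 2 ^ (m / d) := by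
  have key : ∀ a > 0, ∑ d ∈ a.divisors, ((E d : ℤ)) = (2 : ℤ) ^ a := by
    intro a ha
    rw [← Nat.cast_sum, sum_E_eq (by omega : a ≠ 0)]
    push_cast
    rfl
  have h := (ArithmeticFunction.sum_eq_iff_sum_smul_moebius_eq (R := ℤ)).1 key m hm
  rw [← h, ← Nat.sum_divisorsAntidiagonal
    (fun x y => (ArithmeticFunction.moebius x : ℤ) * 2 ^ y)]
  exact Finset.sum_congr rfl fun x _ => by rw [zsmul_eq_mul]; push_cast; ring

lemma E_decomp (m : ℕ) (hm : m ≠ 0) :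
    ∃ M : ℤ, Odd M ∧ (E m : ℤ) = 2 ^ (m / rad m) * M := by
  have hradpos : 0 < rad m := Nat.pos_of_dvd_of_pos (rad_dvd m) (Nat.pos_of_ne_zero hm)
  have htpos : 0 < m / rad m := Nat.div_pos (Nat.le_of_dvd (Nat.pos_of_ne_zero hm) (rad_dvd m)) hradpos
  have h2 : (m / rad m) * rad m = m := Nat.div_mul_cancel (rad_dvd m)
  refine ⟨∑ d ∈ m.divisors, (ArithmeticFunction.moebius d : ℤ) * 2 ^ (m / d - m / rad m), ?_, ?_⟩
  · have hradmem : rad m ∈ m.divisors := Nat.mem_divisors.2 ⟨rad_dvd m, hm⟩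
    rw [← Finset.sum_erase_add _ _ hradmem]
    apply Even.add_odd
    · rw [even_iff_two_dvd]
      apply Finset.dvd_sum
      intro d hd
      rcases Finset.mem_erase.1 hd with ⟨hne, hdm⟩
      by_cases hsq : Squarefree d
      · have hdr : d ∣ rad m := dvd_rad_of_squarefree hsq (Nat.dvd_of_mem_divisors hdm) hm
        have hdpos : 0 < d := Nat.pos_of_mem_divisors hdm
        have hlt : m / rad m < m / d := by
          have h1 : (m / d) * d = m := Nat.div_mul_cancel (Nat.dvd_of_mem_divisors hdm)
          have h3 : d < rad m := lt_of_le_of_ne (Nat.le_of_dvd hradpos hdr) hne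
          by_contra hcon
          push_neg at hcon
          nlinarith
        have hpow : (2 : ℤ) ∣ 2 ^ (m / d - m / rad m) := dvd_pow_self 2 (by omega)
        exact Dvd.dvd.mul_left hpow _
      · simp [ArithmeticFunction.moebius_eq_zero_of_not_squarefree hsq]
    · have hz : m / rad m - m / rad m = 0 := by omega
      rw [hz, pow_zero, mul_one,
        ArithmeticFunction.moebius_apply_of_squarefree (rad_squarefree m hm)]
      exact Odd.pow ⟨-1, by ring⟩
  · rw [E_int m (Nat.pos_of_ne_zero hm), Finset.mul_sum]
    apply Finset.sum_congr rfl
    intro d hd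
    by_cases hsq : Squarefree d
    · have hdr : d ∣ rad m := dvd_rad_of_squarefree hsq (Nat.dvd_of_mem_divisors hd) hm
      have hdpos : 0 < d := Nat.pos_of_mem_divisors hd
      have hle : m / rad m ≤ m / d := by
        have h1 : (m / d) * d = m := Nat.div_mul_cancel (Nat.dvd_of_mem_divisors hd)
        have h3 : d ≤ rad m := Nat.le_of_dvd hradpos hdr
        by_contra hcon
        push_neg at hcon
        nlinarith
      have hsplit : (2 : ℤ) ^ (m / d) = 2 ^ (m / rad m) * 2 ^ (m / d - m / rad m) := by
        rw [← pow_add]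
        congr 1
        omega
      rw [hsplit]
      ring
    · simp [ArithmeticFunction.moebius_eq_zero_of_not_squarefree hsq]

lemma pow_eq_of_odd_mul {a t : ℕ} {X M : ℤ} (hX : Odd X) (hM : Odd M)
    (h : 2 ^ a * X = 2 ^ t * M) : a = t := by
  rcases Nat.lt_trichotomy a t with hlt | heq | hgt
  · exfalso
    have hX2 : X = 2 ^ (t - a) * M := by
      apply mul_left_cancel₀ (a := (2 : ℤ) ^ a) (by positivity)
      rw [h, ← mul_assoc, ← pow_add]
      congr 2
      omega
    have : (2 : ℤ) ∣ X := by
      rw [hX2]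
      exact Dvd.dvd.mul_right (dvd_pow_self 2 (by omega)) M
    exact (fun hE => (Int.not_even_iff_odd.2 hX) hE) (even_iff_two_dvd.2 this)
  · exact heq
  · exfalso
    have hM2 : M = 2 ^ (a - t) * X := by
      apply mul_left_cancel₀ (a := (2 : ℤ) ^ t) (by positivity)
      rw [← h, ← mul_assoc, ← pow_add]
      congr 2
      omega
    have : (2 : ℤ) ∣ M := by
      rw [hM2]
      exact Dvd.dvd.mul_right (dvd_pow_self 2 (by omega)) X
    exact (fun hE => (Int.not_even_iff_odd.2 hM) hE) (even_iff_two_dvd.2 this)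

theorem P_odd_iff_aux {α : ℕ} {u' m : ℕ} (hu' : ¬ 2 ∣ u') (hu0 : u' ≠ 0)
    (hm : m = 2 ^ α * u') :
    Odd (P m) ↔ α = m / rad m := by
  have hm0 : m ≠ 0 := by
    rw [hm]; positivity
  obtain ⟨M, hModd, hE⟩ := E_decomp m hm0
  have hEP : (E m : ℤ) = (P m : ℤ) * m := by
    rw [E_eq_P_mul hm0]; push_cast; ring
  have hkey : 2 ^ α * ((P m : ℤ) * u') = 2 ^ (m / rad m) * M := by
    rw [← hE, hEP, hm]
    push_cast
    ring
  have hu'odd : Odd (u' : ℤ) := by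
    rw [← Int.not_even_iff_odd, even_iff_two_dvd]
    intro hdvd
    exact hu' (by exact_mod_cast hdvd)
  constructor
  · intro hP
    obtain ⟨c, hc⟩ := hP
    have hPint : Odd ((P m : ℤ)) := ⟨c, by exact_mod_cast hc⟩
    have hPodd : Odd ((P m : ℤ) * u') := Int.odd_mul.2 ⟨hPint, hu'odd⟩
    exact pow_eq_of_odd_mul hPodd hModd hkey
  · intro hα
    rw [← hα] at hkey
    have hcancel : (P m : ℤ) * u' = M :=
      mul_left_cancel₀ (a := (2 : ℤ) ^ α) (by positivity) hkey
    have : Odd ((P m : ℤ) * u') := hcancel ▸ hModd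
    have hPodd : Odd ((P m : ℤ)) := (Int.odd_mul.1 this).1
    obtain ⟨c, hc⟩ := hPodd
    refine ⟨c.toNat, ?_⟩
    have hc0 : 0 ≤ c := by omega
    have : (P m : ℤ) = 2 * c.toNat + 1 := by rw [hc]; congr 1; omega
    exact_mod_cast this


end Parity


lemma cond_aux {b c : ℕ} (hc1 : 1 ≤ c) :
    (b + 1 = 2 ^ b * c) ↔ ((b = 0 ∨ b = 1) ∧ c = 1) := by
  constructor
  · intro h
    have hble : b ≤ 1 := by
      by_contra hb2
      push_neg at hb2
      have h1 := two_pow_lower b (by omega)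
      nlinarith
    interval_cases b
    · norm_num at h
      exact ⟨Or.inl rfl, h.symm⟩
    · norm_num at h
      exact ⟨Or.inr rfl, by omega⟩
  · rintro ⟨hb01, rfl⟩
    rcases hb01 with rfl | rfl <;> norm_num

theorem P_two_k_odd_iff' (k : ℕ) (hk : 1 ≤ k) :
    Odd (P (2 * k)) ↔
      (Odd k ∧ Squarefree k) ∨ ∃ q : ℕ, Odd q ∧ Squarefree q ∧ k = 2 * q := by
  have hk0 : k ≠ 0 := by omega
  set b := k.factorization 2 with hb
  set u := k / 2 ^ b with hudef
  have hk_eq : 2 ^ b * u = k := Nat.ordProj_mul_ordCompl_eq_self k 2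
  have hu2 : ¬ 2 ∣ u := Nat.not_dvd_ordCompl Nat.prime_two hk0
  have hu0 : u ≠ 0 := (Nat.ordCompl_pos 2 hk0).ne'
  have hn : 2 * k = 2 ^ (b + 1) * u := by rw [← hk_eq]; ring
  have hmain := P_odd_iff_aux (α := b + 1) (u' := u) (m := 2 * k) hu2 hu0 hn
  have hradu_dvd : rad u ∣ u := rad_dvd u
  have hradu_pos : 0 < rad u := Nat.pos_of_dvd_of_pos hradu_dvd (Nat.pos_of_ne_zero hu0)
  have hrad : rad (2 * k) = 2 * rad u := by rw [hn]; exact rad_two_mul hu2 hu0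
  set c := u / rad u with hc
  have hcu : c * rad u = u := Nat.div_mul_cancel hradu_dvd
  have ht : (2 * k) / rad (2 * k) = 2 ^ b * c := by
    rw [hrad]
    apply Nat.div_eq_of_eq_mul_left (by omega)
    have hre : 2 ^ b * c * (2 * rad u) = 2 ^ (b + 1) * (c * rad u) := by ring
    rw [hn, hre, hcu]
  rw [ht] at hmain
  have hc1 : 1 ≤ c := Nat.div_pos (Nat.le_of_dvd (Nat.pos_of_ne_zero hu0) hradu_dvd) hradu_pos
  have hcsq : c = 1 ↔ Squarefree u := by
    rw [← rad_eq_self_iff hu0]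
    constructor
    · intro h1
      rw [h1, one_mul] at hcu
      exact hcu
    · intro h
      rw [hc, h]
      exact Nat.div_self (by omega)
  have hcond := cond_aux (b := b) hc1
  rw [hmain, hcond, hcsq]
  constructor
  · rintro ⟨hb01, hsqu⟩
    rcases hb01 with hb0' | hb1'
    · left
      have huk : u = k := by rw [hudef, hb0', pow_zero, Nat.div_one]
      refine ⟨?_, huk ▸ hsqu⟩
      have h2k : ¬ 2 ∣ k := huk ▸ hu2
      rw [Nat.odd_iff]
      omega
    · right
      refine ⟨u, ?_, hsqu, ?_⟩
      · rw [Nat.odd_iff]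
        omega
      · rw [← hk_eq, hb1']
        ring
  · rintro (⟨hodd, hsq⟩ | ⟨q, hqodd, hqsq, hkq⟩)
    · have h2k : ¬ 2 ∣ k := by rw [Nat.odd_iff] at hodd; omega
      have hb0' : b = 0 := by
        rw [hb]
        exact Nat.factorization_eq_zero_of_not_dvd h2k
      have huk : u = k := by rw [hudef, hb0', pow_zero, Nat.div_one]
      exact ⟨Or.inl hb0', huk ▸ hsq⟩
    · have hq0 : q ≠ 0 := by
        rintro rfl
        simp [Nat.odd_iff] at hqodd
      have h2q : ¬ 2 ∣ q := by rw [Nat.odd_iff] at hqodd; omega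
      have hb1' : b = 1 := by
        rw [hb, hkq, Nat.factorization_mul (by norm_num) hq0]
        simp [Nat.Prime.factorization Nat.prime_two,
          Nat.factorization_eq_zero_of_not_dvd h2q]
      have huq : u = q := by
        rw [hudef, hb1', pow_one, hkq, Nat.mul_div_cancel_left q (by norm_num)]
      exact ⟨Or.inr hb1', huq ▸ hqsq⟩

end CircWord

/-- `P(2k)` is odd if and only if `k` is an odd squarefree integer or `k = 2q` for an odd
squarefree integer `q`; otherwise `P(2k)` is even. -/
theorem P_two_k_odd_iff (k : ℕ) (hk : 1 ≤ k) :
    Odd (P (2 * k)) ↔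
      (Odd k ∧ Squarefree k) ∨ ∃ q : ℕ, Odd q ∧ Squarefree q ∧ k = 2 * q := by
  exact CircWord.P_two_k_odd_iff' k hk
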